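/- Let ρ(p) = p |GHZ⟩⟨GHZ| + ((1−p)/4) |0⟩⟨0|⊗I₄ with |GHZ⟩ = (1/√2)(|000⟩ + |111⟩) and 0 ≤ p ≤ 1. Then (i) for all unit vectors a, a', b, b', c, c' ∈ ℝ³ the Svetlichny operator S satisfies |tr(S ρ(p))| ≤ 4√2 p, and (ii) there exist unit vectors a, a', b, b', c, c' ∈ ℝ³ with tr(S ρ(p)) = 4√2 p. Consequently ρ(p) violates the Svetlichny inequality |tr(Sρ)| ≤ 4 if and only if p > 1/√2 (≈ 0.707107). -/

import Mathlib

open Matrix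
open scoped Kronecker ComplexOrder

/-- The Pauli matrices σ₁, σ₂, σ₃ (indexed by `Fin 3`). -/
noncomputable def pauli : Fin 3 → Matrix (Fin 2) (Fin 2) ℂ :=
  ![!![0, 1; 1, 0], !![0, -Complex.I; Complex.I, 0], !![1, 0; 0, -1]]

/-- The observable `G = g₁σ₁ + g₂σ₂ + g₃σ₃` associated to a real vector `g ∈ ℝ³`. -/
noncomputable def obs (g : Fin 3 → ℝ) : Matrix (Fin 2) (Fin 2) ℂ :=
  ∑ i : Fin 3, ((g i : ℝ) : ℂ) • pauli i

/-- The Svetlichny operator built from the unit vectors `a, a', b, b', c, c' ∈ ℝ³`. -/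
noncomputable def svetlichny (a a' b b' c c' : Fin 3 → ℝ) :
    Matrix (Fin 2 × Fin 2 × Fin 2) (Fin 2 × Fin 2 × Fin 2) ℂ :=
  obs a ⊗ₖ ((obs b + obs b') ⊗ₖ obs c + (obs b - obs b') ⊗ₖ obs c')
    + obs a' ⊗ₖ ((obs b - obs b') ⊗ₖ obs c - (obs b + obs b') ⊗ₖ obs c')

/-- The vector `|GHZ⟩ = (|000⟩ + |111⟩)/√2`. -/
noncomputable def ghz : Fin 2 × Fin 2 × Fin 2 → ℂ :=
  fun x => if x = (0, 0, 0) ∨ x = (1, 1, 1) then (((Real.sqrt 2)⁻¹ : ℝ) : ℂ) else 0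

/-- The rank-one projector `|0⟩⟨0|`. -/
noncomputable def E00 : Matrix (Fin 2) (Fin 2) ℂ := !![1, 0; 0, 0]

/-- The state `ρ(p) = p|GHZ⟩⟨GHZ| + ((1-p)/4)|0⟩⟨0| ⊗ I₄`. -/
noncomputable def rhoGHZ (p : ℝ) :
    Matrix (Fin 2 × Fin 2 × Fin 2) (Fin 2 × Fin 2 × Fin 2) ℂ :=
  (p : ℂ) • Matrix.vecMulVec ghz (star ghz)
    + (((1 - p) / 4 : ℝ) : ℂ) • (E00 ⊗ₖ (1 : Matrix (Fin 2 × Fin 2) (Fin 2 × Fin 2) ℂ))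


noncomputable def wz (g : Fin 3 → ℝ) : ℂ := (g 0 : ℂ) - (g 1 : ℂ) * Complex.I

lemma obs00 (g : Fin 3 → ℝ) : obs g 0 0 = (g 2 : ℂ) := by
  simp [obs, pauli, Fin.sum_univ_three]
lemma obs01 (g : Fin 3 → ℝ) : obs g 0 1 = wz g := by
  simp [obs, pauli, wz, Fin.sum_univ_three]; ring
lemma obs10 (g : Fin 3 → ℝ) : obs g 1 0 = (starRingEnd ℂ) (wz g) := by
  simp [obs, pauli, wz, Fin.sum_univ_three]
lemma obs11 (g : Fin 3 → ℝ) : obs g 1 1 = -(g 2 : ℂ) := by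
  simp [obs, pauli, Fin.sum_univ_three]
lemma obs_trace (g : Fin 3 → ℝ) : (obs g).trace = 0 := by
  simp [Matrix.trace, Fin.sum_univ_two, obs00, obs11]


lemma trace_S_E00 (a a' b b' c c' : Fin 3 → ℝ) :
    (svetlichny a a' b b' c c' * (E00 ⊗ₖ (1 : Matrix (Fin 2 × Fin 2) (Fin 2 × Fin 2) ℂ))).trace = 0 := by
  have h1 : (1 : Matrix (Fin 2 × Fin 2) (Fin 2 × Fin 2) ℂ)
      = (1 : Matrix (Fin 2) (Fin 2) ℂ) ⊗ₖ (1 : Matrix (Fin 2) (Fin 2) ℂ) := by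
    rw [Matrix.one_kronecker_one]
  rw [svetlichny, add_mul, h1, ← Matrix.mul_kronecker_mul, ← Matrix.mul_kronecker_mul,
    Matrix.trace_add, Matrix.trace_kronecker, Matrix.trace_kronecker]
  have hM : ∀ u v w x : Matrix (Fin 2) (Fin 2) ℂ, u.trace = 0 → v.trace = 0 →
      ((u ⊗ₖ w + v ⊗ₖ x) * ((1:Matrix (Fin 2) (Fin 2) ℂ) ⊗ₖ 1)).trace = 0 := by
    intro u v w x hu hv
    rw [add_mul, ← Matrix.mul_kronecker_mul, ← Matrix.mul_kronecker_mul, Matrix.trace_add,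
      Matrix.trace_kronecker, Matrix.trace_kronecker]
    simp [Matrix.mul_one, hu, hv]
  have hM' : ∀ u v w x : Matrix (Fin 2) (Fin 2) ℂ, u.trace = 0 → v.trace = 0 →
      ((u ⊗ₖ w - v ⊗ₖ x) * ((1:Matrix (Fin 2) (Fin 2) ℂ) ⊗ₖ 1)).trace = 0 := by
    intro u v w x hu hv
    rw [sub_mul, ← Matrix.mul_kronecker_mul, ← Matrix.mul_kronecker_mul, Matrix.trace_sub,
      Matrix.trace_kronecker, Matrix.trace_kronecker]
    simp [Matrix.mul_one, hu, hv]
  rw [hM _ _ _ _ (by simp [Matrix.trace_add, obs_trace]) (by simp [Matrix.trace_sub, obs_trace]),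
    hM' _ _ _ _ (by simp [Matrix.trace_sub, obs_trace]) (by simp [Matrix.trace_add, obs_trace])]
  ring

lemma trace_mul_ghz (M : Matrix (Fin 2 × Fin 2 × Fin 2) (Fin 2 × Fin 2 × Fin 2) ℂ) :
    (M * Matrix.vecMulVec ghz (star ghz)).trace
      = (M (0,0,0) (0,0,0) + M (0,0,0) (1,1,1) + M (1,1,1) (0,0,0) + M (1,1,1) (1,1,1)) / 2 := by
  have h2 : (((Real.sqrt 2)⁻¹ : ℝ) : ℂ) * (((Real.sqrt 2)⁻¹ : ℝ) : ℂ) = 1/2 := by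
    rw [← Complex.ofReal_mul, ← mul_inv, Real.mul_self_sqrt (by norm_num : (0:ℝ) ≤ 2)]
    norm_num
  simp only [Matrix.trace, Matrix.diag, Matrix.mul_apply, Matrix.vecMulVec_apply,
    Pi.star_apply, ghz, Fintype.sum_prod_type, Fin.sum_univ_two]
  have h2' : (((Real.sqrt 2 : ℝ) : ℂ))⁻¹ ^ 2 = 1/2 := by
    rw [sq, ← Complex.ofReal_inv]; exact h2
  norm_num [Prod.ext_iff, Complex.conj_ofReal]
  rw [← sq, h2']
  ring


noncomputable def zS (a a' b b' c c' : Fin 3 → ℝ) : ℂ :=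
  wz a * ((wz b + wz b') * wz c + (wz b - wz b') * wz c')
    + wz a' * ((wz b - wz b') * wz c - (wz b + wz b') * wz c')

lemma trace_ghz_part (a a' b b' c c' : Fin 3 → ℝ) :
    (svetlichny a a' b b' c c' * Matrix.vecMulVec ghz (star ghz)).trace
      = (zS a a' b b' c c' + (starRingEnd ℂ) (zS a a' b b' c c')) / 2 := by
  rw [trace_mul_ghz]
  simp only [svetlichny, zS, Matrix.add_apply, Matrix.sub_apply, Matrix.kroneckerMap_apply,
    obs00, obs01, obs10, obs11, map_add, _root_.map_mul, map_sub, map_neg]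
  ring

lemma trace_master (p : ℝ) (a a' b b' c c' : Fin 3 → ℝ) :
    (svetlichny a a' b b' c c' * rhoGHZ p).trace
      = (p : ℂ) * ((zS a a' b b' c c' + (starRingEnd ℂ) (zS a a' b b' c c')) / 2) := by
  rw [rhoGHZ, Matrix.mul_add, Matrix.mul_smul, Matrix.mul_smul, Matrix.trace_add,
    Matrix.trace_smul, Matrix.trace_smul, trace_ghz_part, trace_S_E00]
  simp

lemma wz_abs_le (g : Fin 3 → ℝ) (h : ∑ i : Fin 3, g i ^ 2 = 1) : ‖wz g‖ ≤ 1 := by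
  have hsq : (‖wz g‖)^2 = g 0 ^ 2 + g 1 ^ 2 := by
    rw [Complex.sq_norm, Complex.normSq_apply]
    simp [wz]
    ring
  rw [Fin.sum_univ_three] at h
  nlinarith [norm_nonneg (wz g), sq_nonneg (g 2)]

set_option maxHeartbeats 2000000 in
lemma zS_abs_le (a a' b b' c c' : Fin 3 → ℝ)
    (ha : ∑ i : Fin 3, a i ^ 2 = 1) (ha' : ∑ i : Fin 3, a' i ^ 2 = 1)
    (hb : ∑ i : Fin 3, b i ^ 2 = 1) (hb' : ∑ i : Fin 3, b' i ^ 2 = 1)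
    (hc : ∑ i : Fin 3, c i ^ 2 = 1) (hc' : ∑ i : Fin 3, c' i ^ 2 = 1) :
    ‖zS a a' b b' c c'‖ ≤ 4 * Real.sqrt 2 := by
  set α := wz a; set α' := wz a'; set β := wz b; set β' := wz b'; set γ := wz c; set γ' := wz c'
  have hα := wz_abs_le a ha
  have hα' := wz_abs_le a' ha'
  have hβ := wz_abs_le b hb
  have hβ' := wz_abs_le b' hb'
  have hγ := wz_abs_le c hc
  have hγ' := wz_abs_le c' hc'
  set s := ‖β + β'‖ with hs
  set t := ‖β - β'‖ with ht
  have hpar : s^2 + t^2 ≤ 4 := by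
    rw [hs, ht, Complex.sq_norm, Complex.sq_norm, Complex.normSq_apply, Complex.normSq_apply]
    have h1 : (‖β‖)^2 = β.re^2 + β.im^2 := by
      rw [Complex.sq_norm, Complex.normSq_apply]; ring
    have h2 : (‖β'‖)^2 = β'.re^2 + β'.im^2 := by
      rw [Complex.sq_norm, Complex.normSq_apply]; ring
    have hb1 : (‖β‖)^2 ≤ 1 := by nlinarith [norm_nonneg β]
    have hb2 : (‖β'‖)^2 ≤ 1 := by nlinarith [norm_nonneg β']
    simp only [Complex.add_re, Complex.add_im, Complex.sub_re, Complex.sub_im]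
    nlinarith [h1, h2]
  have hst : s + t ≤ 2 * Real.sqrt 2 := by
    nlinarith [sq_nonneg (s - t), Real.sq_sqrt (by norm_num : (0:ℝ) ≤ 2),
      Real.sqrt_nonneg 2, norm_nonneg (β + β'), norm_nonneg (β - β')]
  have hX : ‖(β + β') * γ + (β - β') * γ'‖ ≤ s + t := by
    calc ‖(β + β') * γ + (β - β') * γ'‖
        ≤ ‖(β + β') * γ‖ + ‖(β - β') * γ'‖ := norm_add_le _ _
      _ = s * ‖γ‖ + t * ‖γ'‖ := by rw [norm_mul, norm_mul]
      _ ≤ s + t := by nlinarith [norm_nonneg (β + β'), norm_nonneg (β - β'),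
            norm_nonneg γ, norm_nonneg γ']
  have hY : ‖(β - β') * γ - (β + β') * γ'‖ ≤ s + t := by
    calc ‖(β - β') * γ - (β + β') * γ'‖
        ≤ ‖(β - β') * γ‖ + ‖(β + β') * γ'‖ := by
          simpa [sub_eq_add_neg] using norm_add_le ((β - β') * γ) (-((β + β') * γ'))
      _ = t * ‖γ‖ + s * ‖γ'‖ := by rw [norm_mul, norm_mul]
      _ ≤ s + t := by nlinarith [norm_nonneg (β + β'), norm_nonneg (β - β'),
            norm_nonneg γ, norm_nonneg γ']
  have hzdef : zS a a' b b' c c'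
      = α * ((β + β') * γ + (β - β') * γ') + α' * ((β - β') * γ - (β + β') * γ') := rfl
  rw [hzdef]
  calc ‖α * ((β + β') * γ + (β - β') * γ') + α' * ((β - β') * γ - (β + β') * γ')‖
      ≤ ‖α * ((β + β') * γ + (β - β') * γ')‖
        + ‖α' * ((β - β') * γ - (β + β') * γ')‖ := norm_add_le _ _
    _ = ‖α‖ * ‖(β + β') * γ + (β - β') * γ'‖
        + ‖α'‖ * ‖(β - β') * γ - (β + β') * γ'‖ := by
          rw [norm_mul, norm_mul]
    _ ≤ (s + t) + (s + t) := by
          nlinarith [norm_nonneg α, norm_nonneg α',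
            norm_nonneg ((β + β') * γ + (β - β') * γ'),
            norm_nonneg ((β - β') * γ - (β + β') * γ')]
    _ ≤ 4 * Real.sqrt 2 := by linarith

noncomputable def va : Fin 3 → ℝ := ![1, 0, 0]
noncomputable def va' : Fin 3 → ℝ := ![0, -1, 0]
noncomputable def vc : Fin 3 → ℝ := ![(Real.sqrt 2)⁻¹, (Real.sqrt 2)⁻¹, 0]
noncomputable def vc' : Fin 3 → ℝ := ![(Real.sqrt 2)⁻¹, -(Real.sqrt 2)⁻¹, 0]

lemma va_norm : ∑ i : Fin 3, va i ^ 2 = 1 := by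
  simp [va, Fin.sum_univ_three]
lemma va'_norm : ∑ i : Fin 3, va' i ^ 2 = 1 := by
  simp [va', Fin.sum_univ_three]
lemma vc_norm : ∑ i : Fin 3, vc i ^ 2 = 1 := by
  have h2 : (Real.sqrt 2) * (Real.sqrt 2) = 2 := Real.mul_self_sqrt (by norm_num)
  have hne : (Real.sqrt 2 : ℝ) ≠ 0 := by positivity
  simp [vc, Fin.sum_univ_three]
  field_simp
  norm_num
lemma vc'_norm : ∑ i : Fin 3, vc' i ^ 2 = 1 := by
  have h2 : (Real.sqrt 2) * (Real.sqrt 2) = 2 := Real.mul_self_sqrt (by norm_num)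
  have hne : (Real.sqrt 2 : ℝ) ≠ 0 := by positivity
  simp [vc', Fin.sum_univ_three]
  field_simp
  norm_num

lemma zS_w : zS va va' va va' vc vc' = ((4 * Real.sqrt 2 : ℝ) : ℂ) := by
  have h2 : (Real.sqrt 2) * (Real.sqrt 2) = 2 := Real.mul_self_sqrt (by norm_num)
  have hne : (Real.sqrt 2 : ℝ) ≠ 0 := by positivity
  simp only [zS, wz, va, va', vc, vc', Matrix.cons_val_zero, Matrix.cons_val_one,
    Matrix.head_cons]
  rw [Complex.ext_iff]
  push_cast
  constructor
  · simp [Complex.add_re, Complex.add_im, Complex.mul_re, Complex.mul_im]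
    field_simp
    ring
  · simp [Complex.add_re, Complex.add_im, Complex.mul_re, Complex.mul_im]


set_option maxHeartbeats 1000000 in
/-- (i) Every Svetlichny operator mean value on `ρ(p)` is bounded by `4√2 p`;
(ii) the bound is attained; consequently `ρ(p)` violates the Svetlichny inequality
`|tr(Sρ)| ≤ 4` if and only if `p > 1/√2`. -/
theorem svetlichny_rhoGHZ (p : ℝ) (hp0 : 0 ≤ p) (hp1 : p ≤ 1) :
    (∀ a a' b b' c c' : Fin 3 → ℝ,
      (∑ i : Fin 3, a i ^ 2 = 1) → (∑ i : Fin 3, a' i ^ 2 = 1) →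
      (∑ i : Fin 3, b i ^ 2 = 1) → (∑ i : Fin 3, b' i ^ 2 = 1) →
      (∑ i : Fin 3, c i ^ 2 = 1) → (∑ i : Fin 3, c' i ^ 2 = 1) →
      ‖(svetlichny a a' b b' c c' * rhoGHZ p).trace‖ ≤ 4 * Real.sqrt 2 * p)
    ∧ (∃ a a' b b' c c' : Fin 3 → ℝ,
      (∑ i : Fin 3, a i ^ 2 = 1) ∧ (∑ i : Fin 3, a' i ^ 2 = 1) ∧
      (∑ i : Fin 3, b i ^ 2 = 1) ∧ (∑ i : Fin 3, b' i ^ 2 = 1) ∧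
      (∑ i : Fin 3, c i ^ 2 = 1) ∧ (∑ i : Fin 3, c' i ^ 2 = 1) ∧
      (svetlichny a a' b b' c c' * rhoGHZ p).trace = ((4 * Real.sqrt 2 * p : ℝ) : ℂ))
    ∧ ((∃ a a' b b' c c' : Fin 3 → ℝ,
        (∑ i : Fin 3, a i ^ 2 = 1) ∧ (∑ i : Fin 3, a' i ^ 2 = 1) ∧
        (∑ i : Fin 3, b i ^ 2 = 1) ∧ (∑ i : Fin 3, b' i ^ 2 = 1) ∧
        (∑ i : Fin 3, c i ^ 2 = 1) ∧ (∑ i : Fin 3, c' i ^ 2 = 1) ∧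
        4 < ‖(svetlichny a a' b b' c c' * rhoGHZ p).trace‖)
      ↔ 1 / Real.sqrt 2 < p) := by
  have sqrt2_pos : (0:ℝ) < Real.sqrt 2 := by positivity
  have h2 : Real.sqrt 2 * Real.sqrt 2 = 2 := Real.mul_self_sqrt (by norm_num)
  have part1 : ∀ a a' b b' c c' : Fin 3 → ℝ,
      (∑ i : Fin 3, a i ^ 2 = 1) → (∑ i : Fin 3, a' i ^ 2 = 1) →
      (∑ i : Fin 3, b i ^ 2 = 1) → (∑ i : Fin 3, b' i ^ 2 = 1) →
      (∑ i : Fin 3, c i ^ 2 = 1) → (∑ i : Fin 3, c' i ^ 2 = 1) →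
      ‖(svetlichny a a' b b' c c' * rhoGHZ p).trace‖ ≤ 4 * Real.sqrt 2 * p := by
    intro a a' b b' c c' ha ha' hb hb' hc hc'
    rw [trace_master, norm_mul, Complex.add_conj]
    have hre := Complex.abs_re_le_norm (zS a a' b b' c c')
    have habs := zS_abs_le a a' b b' c c' ha ha' hb hb' hc hc'
    have h1 : ‖((p : ℝ) : ℂ)‖ = p := by
      rw [Complex.norm_real, Real.norm_eq_abs, abs_of_nonneg hp0]
    have hq : ‖(((2 * (zS a a' b b' c c').re : ℝ)) : ℂ) / 2‖ ≤ 4 * Real.sqrt 2 := by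
      rw [norm_div, Complex.norm_real, Real.norm_eq_abs, Complex.norm_two]
      have : |2 * (zS a a' b b' c c').re| = 2 * |(zS a a' b b' c c').re| := by
        rw [abs_mul]; norm_num
      rw [this]
      nlinarith [abs_nonneg ((zS a a' b b' c c').re)]
    rw [h1]
    nlinarith [norm_nonneg ((((2 * (zS a a' b b' c c').re : ℝ)) : ℂ) / 2)]
  have part2 : (svetlichny va va' va va' vc vc' * rhoGHZ p).trace
      = ((4 * Real.sqrt 2 * p : ℝ) : ℂ) := by
    rw [trace_master, zS_w, Complex.conj_ofReal]
    push_cast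
    ring
  refine ⟨part1, ⟨va, va', va, va', vc, vc', va_norm, va'_norm, va_norm, va'_norm,
    vc_norm, vc'_norm, part2⟩, ?_, ?_⟩
  · rintro ⟨a, a', b, b', c, c', ha, ha', hb, hb', hc, hc', hgt⟩
    have hle := part1 a a' b b' c c' ha ha' hb hb' hc hc'
    have h4 : (4:ℝ) < 4 * Real.sqrt 2 * p := lt_of_lt_of_le hgt hle
    rw [div_lt_iff₀ sqrt2_pos]
    nlinarith
  · intro hp
    refine ⟨va, va', va, va', vc, vc', va_norm, va'_norm, va_norm, va'_norm,
      vc_norm, vc'_norm, ?_⟩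
    rw [part2, Complex.norm_real, Real.norm_eq_abs, abs_of_nonneg (by positivity)]
    rw [div_lt_iff₀ sqrt2_pos] at hp
    nlinarith
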